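/- Let 𝕂 be a field, r ≥ 1, and let H be a finite-dimensional 𝕂-linear subspace of the polynomial ring 𝕂[x₁,…,x_r]. Let G = (V,E) be a finite simple graph that admits a representation over H, i.e., assignments v ↦ f_v ∈ H and v ↦ c_v ∈ 𝕂^r such that f_v(c_v) ≠ 0 for every v ∈ V, and f_u(c_v) = 0 for every pair of distinct non-adjacent vertices u, v ∈ V. Then for every k ≥ 1, α(G^k) ≤ (dim_𝕂 H)^k. -/

import Mathlib

open Finset
set_option maxHeartbeats 1000000

/-- A family of functions with a "diagonal" evaluation matrix is linearly independent. -/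
lemma linIndep_of_eval {𝕂 X ι : Type*} [Field 𝕂]
    (g : ι → X → 𝕂) (p : ι → X)
    (hdiag : ∀ i, g i (p i) ≠ 0)
    (hoff : ∀ i j, i ≠ j → g i (p j) = 0) :
    LinearIndependent 𝕂 g := by
  rw [linearIndependent_iff']
  intro t c h i hi
  have h' := congrFun h (p i)
  simp only [Finset.sum_apply, Pi.smul_apply, smul_eq_mul, Pi.zero_apply] at h'
  rw [Finset.sum_eq_single i (fun j _ hj => by rw [hoff j i hj, mul_zero])
    (fun h => absurd hi h)] at h'
  exact (mul_eq_zero.mp h').resolve_right (hdiag i)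



/-- The `k`-th strong power of a simple graph: vertices are `k`-tuples, and two distinct
tuples are adjacent iff in each coordinate the entries are equal or adjacent. -/
def gStrongPow {α : Type*} (G : SimpleGraph α) (k : ℕ) :
    SimpleGraph (Fin k → α) where
  Adj u v := u ≠ v ∧ ∀ i, u i = v i ∨ G.Adj (u i) (v i)
  symm := by
    constructor
    rintro u v ⟨hne, h⟩
    exact ⟨hne.symm, fun i => (h i).imp Eq.symm (fun h' => G.adj_symm h')⟩
  loopless := by
    constructor
    intro u h
    exact h.1 rfl
/-- The independence number of a graph on a finite vertex type: the maximum size of a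
set of pairwise non-adjacent vertices. -/
noncomputable def gIndepNum {α : Type*} [Fintype α] (G : SimpleGraph α) : ℕ :=
  sSup {n | ∃ s : Finset α, s.card = n ∧ (s : Set α).Pairwise (fun a b => ¬ G.Adj a b)}

/-- If a finite simple graph `G` has a representation over a finite-dimensional space
`H` of polynomials in `r` variables over a field `𝕂`, then `α(G^k) ≤ (dim H)^k`
for every `k ≥ 1`. -/
theorem indepNum_strongPow_le_finrank_pow_of_representation
    {𝕂 : Type*} [Field 𝕂] (r : ℕ) (hr : 1 ≤ r)
    (H : Submodule 𝕂 (MvPolynomial (Fin r) 𝕂)) [FiniteDimensional 𝕂 H]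
    {V : Type*} [Fintype V] (G : SimpleGraph V)
    (f : V → MvPolynomial (Fin r) 𝕂) (c : V → Fin r → 𝕂)
    (hfH : ∀ v, f v ∈ H)
    (hdiag : ∀ v, MvPolynomial.eval (c v) (f v) ≠ 0)
    (hoff : ∀ u v, u ≠ v → ¬ G.Adj u v → MvPolynomial.eval (c v) (f u) = 0) :
    ∀ k, 1 ≤ k → gIndepNum (gStrongPow G k) ≤ (Module.finrank 𝕂 H) ^ k := by
  intro k hk
  classical
  set d := Module.finrank 𝕂 H with hd
  unfold gIndepNum
  refine csSup_le ⟨0, ∅, by simp, by simp⟩ ?_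
  rintro n ⟨s, rfl, hpair⟩
  -- the product functions
  set F : (Fin k → V) → (Fin k → Fin r → 𝕂) → 𝕂 :=
    fun u y => ∏ i, MvPolynomial.eval (y i) (f (u i)) with hF
  set P : (Fin k → V) → (Fin k → Fin r → 𝕂) := fun u i => c (u i) with hP
  -- basis of H
  let b : Module.Basis (Fin d) 𝕂 H := Module.finBasis 𝕂 H
  set B : (Fin k → Fin d) → (Fin k → Fin r → 𝕂) → 𝕂 :=
    fun p y => ∏ i, MvPolynomial.eval (y i) ((b (p i)) : MvPolynomial (Fin r) 𝕂) with hB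
  -- each F u lies in the span of range B
  have hmem : ∀ u : Fin k → V, F u ∈ Submodule.span 𝕂 (Set.range B) := by
    intro u
    set a : Fin k → Fin d → 𝕂 := fun i j => b.repr ⟨f (u i), hfH (u i)⟩ j with ha
    have hfe : ∀ (i : Fin k) (y : Fin r → 𝕂),
        MvPolynomial.eval y (f (u i))
          = ∑ j, a i j * MvPolynomial.eval y ((b j : MvPolynomial (Fin r) 𝕂)) := by
      intro i y
      have h1 : (⟨f (u i), hfH (u i)⟩ : H) = ∑ j, a i j • b j := (b.sum_repr _).symm
      have h2 : f (u i) = ∑ j, a i j • ((b j : MvPolynomial (Fin r) 𝕂)) := by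
        have := congrArg (Subtype.val) h1
        simpa using this
      rw [h2]
      simp [Finset.mul_sum, smul_eq_mul]
    have key : F u = ∑ p : Fin k → Fin d, (∏ i, a i (p i)) • B p := by
      funext y
      simp only [Finset.sum_apply, Pi.smul_apply, smul_eq_mul, hF, hB]
      rw [show (∏ i, MvPolynomial.eval (y i) (f (u i)))
          = ∏ i, ∑ j, a i j * MvPolynomial.eval (y i) ((b j : MvPolynomial (Fin r) 𝕂))
        from Finset.prod_congr rfl (fun i _ => hfe i (y i))]
      rw [Finset.prod_univ_sum]
      refine Finset.sum_congr (by simp) (fun p _ => ?_)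
      rw [Finset.prod_mul_distrib]
    rw [key]
    exact Submodule.sum_smul_mem _ _ (fun p _ =>
      Submodule.subset_span (Set.mem_range_self p))
  -- linear independence of the family indexed by s
  have hli : LinearIndependent 𝕂 (fun x : s => F x) := by
    apply linIndep_of_eval (fun x : s => F x) (fun x : s => P x)
    · intro x
      exact Finset.prod_ne_zero_iff.mpr (fun i _ => hdiag _)
    · intro x y hxy
      have hne : (x : Fin k → V) ≠ (y : Fin k → V) := fun h => hxy (Subtype.ext h)
      have hnadj : ¬ (gStrongPow G k).Adj x y := hpair x.2 y.2 hne
      have : ∃ i, (x : Fin k → V) i ≠ (y : Fin k → V) i ∧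
          ¬ G.Adj ((x : Fin k → V) i) ((y : Fin k → V) i) := by
        by_contra hcon
        push_neg at hcon
        exact hnadj ⟨hne, fun i => by
          rcases em ((x : Fin k → V) i = (y : Fin k → V) i) with h | h
          · exact Or.inl h
          · exact Or.inr (hcon i h)⟩
      obtain ⟨i, hne', hna⟩ := this
      exact Finset.prod_eq_zero (Finset.mem_univ i) (hoff _ _ hne' hna)
  -- conclude
  let W := Submodule.span 𝕂 (Set.range B)
  haveI : FiniteDimensional 𝕂 W := FiniteDimensional.span_of_finite 𝕂 (Set.finite_range B)
  have hli' : LinearIndependent 𝕂 (fun x : s => (⟨F x, hmem x⟩ : W)) := by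
    exact hli.of_comp W.subtype
  have h1 : Fintype.card s ≤ Module.finrank 𝕂 W := hli'.fintype_card_le_finrank
  have h2 : Module.finrank 𝕂 W ≤ Fintype.card (Fin k → Fin d) := finrank_range_le_card B
  calc s.card = Fintype.card s := (Fintype.card_coe s).symm
    _ ≤ Module.finrank 𝕂 W := h1
    _ ≤ Fintype.card (Fin k → Fin d) := h2
    _ = d ^ k := by simp [Fintype.card_fun]
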